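/- For every integer k ≥ 0, Σ_{n=1-k}^∞ (-1)^{n-1} / ∏_{j=0}^{2k+1} (2n+2j−1)^2 = (-1)^{k+1} · ( ((k+1)!)^3/(((2k+2)!)^3 · k!) · π − 1/(2·((2k+1)!!)^4) ), where the sum runs over all integers n ≥ 1−k. -/

import Mathlib

open Filter Finset Real Topology

noncomputable def Ff (k i : ℕ) : ℝ :=
  (-1) ^ (i + k) /
    ∏ j ∈ Finset.range (2 * k + 2), (2 * (i : ℝ) + 2 * (j : ℝ) - 2 * (k : ℝ) + 1) ^ 2

lemma sq_ge_one (k i j : ℕ) : 1 ≤ (2 * (i : ℝ) + 2 * (j : ℝ) - 2 * (k : ℝ) + 1) ^ 2 := by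
  have h : ((2 * (i : ℤ) + 2 * (j : ℤ) - 2 * (k : ℤ) + 1 : ℤ) : ℝ)
      = 2 * (i : ℝ) + 2 * (j : ℝ) - 2 * (k : ℝ) + 1 := by push_cast; ring
  rw [← h]
  have hne : (2 * (i : ℤ) + 2 * (j : ℤ) - 2 * (k : ℤ) + 1) ≠ 0 := by omega
  have h2 : (1 : ℤ) ≤ (2 * (i : ℤ) + 2 * (j : ℤ) - 2 * (k : ℤ) + 1) ^ 2 := by
    have := Int.one_le_abs hne
    nlinarith [sq_abs (2 * (i : ℤ) + 2 * (j : ℤ) - 2 * (k : ℤ) + 1)]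
  exact_mod_cast h2

lemma prod_pos (k i : ℕ) :
    0 < ∏ j ∈ Finset.range (2 * k + 2), (2 * (i : ℝ) + 2 * (j : ℝ) - 2 * (k : ℝ) + 1) ^ 2 :=
  Finset.prod_pos fun j _ => lt_of_lt_of_le one_pos (sq_ge_one k i j)

lemma prod_ge (k i : ℕ) :
    (2 * (i : ℝ) + 3) ^ 2 ≤
      ∏ j ∈ Finset.range (2 * k + 2), (2 * (i : ℝ) + 2 * (j : ℝ) - 2 * (k : ℝ) + 1) ^ 2 := by
  rw [Finset.prod_range_succ]
  have h1 : (1 : ℝ) ≤ ∏ j ∈ Finset.range (2 * k + 1),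
      (2 * (i : ℝ) + 2 * (j : ℝ) - 2 * (k : ℝ) + 1) ^ 2 := by
    have := Finset.prod_le_prod (s := Finset.range (2 * k + 1))
      (f := fun _ : ℕ => (1:ℝ)) (g := fun j : ℕ => (2 * (i : ℝ) + 2 * (j : ℝ) - 2 * (k : ℝ) + 1) ^ 2)
      (by intro j _; norm_num) (fun j _ => sq_ge_one k i j)
    simpa using this
  have h2 : (2 * (i : ℝ) + 3) ^ 2 ≤
      (2 * (i : ℝ) + 2 * ((2 * k + 1 : ℕ) : ℝ) - 2 * (k : ℝ) + 1) ^ 2 := by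
    have : 2 * (i : ℝ) + 2 * ((2 * k + 1 : ℕ) : ℝ) - 2 * (k : ℝ) + 1
        = 2 * (i : ℝ) + 2 * (k : ℝ) + 3 := by push_cast; ring
    rw [this]
    have hk : (0:ℝ) ≤ (k:ℝ) := Nat.cast_nonneg k
    have hi : (0:ℝ) ≤ (i:ℝ) := Nat.cast_nonneg i
    nlinarith
  nlinarith [prod_pos k i, sq_nonneg (2 * (i : ℝ) + 3)]

lemma Ff_abs (k i : ℕ) : |Ff k i| ≤ 1 / (2 * (i : ℝ) + 3) ^ 2 := by
  have hpos : (0:ℝ) < (2 * (i : ℝ) + 3) ^ 2 := by positivity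
  have := prod_ge k i
  rw [Ff, abs_div, abs_pow, abs_neg, abs_one, one_pow,
    abs_of_pos (prod_pos k i)]
  exact one_div_le_one_div_of_le hpos this

lemma summable_Ff (k : ℕ) : Summable (Ff k) := by
  have h0 : Summable (fun n : ℕ => 1 / (n : ℝ) ^ 2) :=
    Real.summable_one_div_nat_pow.mpr one_lt_two
  have h1 : Summable (fun n : ℕ => 1 / ((n : ℝ) + 1) ^ 2) := by
    have := (summable_nat_add_iff 1).mpr h0
    simpa [Nat.cast_add] using this
  apply Summable.of_abs
  apply Summable.of_nonneg_of_le (fun i => abs_nonneg _) _ h1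
  intro i
  calc |Ff k i| ≤ 1 / (2 * (i : ℝ) + 3) ^ 2 := Ff_abs k i
    _ ≤ 1 / ((i : ℝ) + 1) ^ 2 := by
        apply one_div_le_one_div_of_le (by positivity)
        have : (0:ℝ) ≤ (i:ℝ) := Nat.cast_nonneg i
        nlinarith

lemma prod_shift1 (k i : ℕ) :
    (∏ j ∈ Finset.range (2 * k + 2),
        (2 * ((i : ℝ) + 1) + 2 * (j : ℝ) - 2 * (k : ℝ) + 1) ^ 2) * (2 * (i : ℝ) - 2 * (k : ℝ) + 1) ^ 2
      = (∏ j ∈ Finset.range (2 * k + 2),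
        (2 * (i : ℝ) + 2 * (j : ℝ) - 2 * (k : ℝ) + 1) ^ 2) * (2 * (i : ℝ) + 2 * (k : ℝ) + 5) ^ 2 := by
  have h1 := Finset.prod_range_succ
    (fun j : ℕ => (2 * (i : ℝ) + 2 * (j : ℝ) - 2 * (k : ℝ) + 1) ^ 2) (2 * k + 2)
  have h2 := Finset.prod_range_succ'
    (fun j : ℕ => (2 * (i : ℝ) + 2 * (j : ℝ) - 2 * (k : ℝ) + 1) ^ 2) (2 * k + 2)
  have e1 : ∀ j : ℕ, (2 * (i : ℝ) + 2 * ((j + 1 : ℕ) : ℝ) - 2 * (k : ℝ) + 1) ^ 2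
      = (2 * ((i : ℝ) + 1) + 2 * (j : ℝ) - 2 * (k : ℝ) + 1) ^ 2 := by
    intro j; push_cast; ring
  have e2 : (2 * (i : ℝ) + 2 * ((2 * k + 2 : ℕ) : ℝ) - 2 * (k : ℝ) + 1) ^ 2
      = (2 * (i : ℝ) + 2 * (k : ℝ) + 5) ^ 2 := by push_cast; ring
  have e3 : (2 * (i : ℝ) + 2 * ((0 : ℕ) : ℝ) - 2 * (k : ℝ) + 1) ^ 2
      = (2 * (i : ℝ) - 2 * (k : ℝ) + 1) ^ 2 := by push_cast; ring
  simp only [e2] at h1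
  simp only [e1, e3] at h2
  rw [h1] at h2
  linarith [h2]

lemma prod_step (k i : ℕ) :
    ∏ j ∈ Finset.range (2 * (k + 1) + 2),
        (2 * ((i : ℝ) + 1) + 2 * (j : ℝ) - 2 * ((k : ℝ) + 1) + 1) ^ 2
      = (∏ j ∈ Finset.range (2 * k + 2), (2 * (i : ℝ) + 2 * (j : ℝ) - 2 * (k : ℝ) + 1) ^ 2) *
          ((2 * (i : ℝ) + 2 * (k : ℝ) + 5) ^ 2 * (2 * (i : ℝ) + 2 * (k : ℝ) + 7) ^ 2) := by
  have hidx : 2 * (k + 1) + 2 = (2 * k + 2) + 1 + 1 := by ring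
  rw [hidx, Finset.prod_range_succ, Finset.prod_range_succ]
  have e0 : ∀ j : ℕ, (2 * ((i : ℝ) + 1) + 2 * (j : ℝ) - 2 * ((k : ℝ) + 1) + 1) ^ 2
      = (2 * (i : ℝ) + 2 * (j : ℝ) - 2 * (k : ℝ) + 1) ^ 2 := fun j => by ring
  simp only [e0]
  have e1 : (2 * (i : ℝ) + 2 * (((2 * k + 2 : ℕ)) : ℝ) - 2 * (k : ℝ) + 1) ^ 2
      = (2 * (i : ℝ) + 2 * (k : ℝ) + 5) ^ 2 := by push_cast; ring
  have e2 : (2 * (i : ℝ) + 2 * (((2 * k + 2 + 1 : ℕ)) : ℝ) - 2 * (k : ℝ) + 1) ^ 2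
      = (2 * (i : ℝ) + 2 * (k : ℝ) + 7) ^ 2 := by push_cast; ring
  rw [e1, e2]; ring

lemma Ff_succ (k i : ℕ) :
    Ff k (i + 1) * (2 * (i : ℝ) + 2 * (k : ℝ) + 5) ^ 2
      = -(Ff k i) * (2 * (i : ℝ) - 2 * (k : ℝ) + 1) ^ 2 := by
  have hP0 := prod_pos k i
  have hP1 := prod_pos k (i + 1)
  have key := prod_shift1 k i
  rw [Ff, Ff]
  have hexp : i + 1 + k = (i + k) + 1 := by ring
  rw [hexp, pow_succ]
  have ecast : ∀ j : ℕ, (2 * ((i + 1 : ℕ) : ℝ) + 2 * (j : ℝ) - 2 * (k : ℝ) + 1) ^ 2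
      = (2 * ((i : ℝ) + 1) + 2 * (j : ℝ) - 2 * (k : ℝ) + 1) ^ 2 := by
    intro j; push_cast; ring
  simp only [ecast] at hP1 ⊢
  rw [div_mul_eq_mul_div, neg_mul, div_mul_eq_mul_div, neg_div', div_eq_div_iff hP1.ne' hP0.ne']
  linear_combination ((-1 : ℝ) ^ (i + k)) * key

lemma Ff_step (k i : ℕ) :
    Ff (k + 1) (i + 1) * ((2 * (i : ℝ) + 2 * (k : ℝ) + 5) ^ 2 * (2 * (i : ℝ) + 2 * (k : ℝ) + 7) ^ 2)
      = Ff k i := by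
  have hP0 := prod_pos k i
  have hP1 := prod_pos (k + 1) (i + 1)
  have key := prod_step k i
  rw [Ff, Ff]
  have hexp : i + 1 + (k + 1) = (i + k) + 1 + 1 := by ring
  rw [hexp, pow_succ, pow_succ]
  have ecast : ∀ j : ℕ, (2 * ((i + 1 : ℕ) : ℝ) + 2 * (j : ℝ) - 2 * ((k + 1 : ℕ) : ℝ) + 1) ^ 2
      = (2 * ((i : ℝ) + 1) + 2 * (j : ℝ) - 2 * ((k : ℝ) + 1) + 1) ^ 2 := by
    intro j; push_cast; ring
  simp only [ecast] at hP1 ⊢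
  rw [key] at hP1 ⊢
  field_simp

noncomputable def Gg (k i : ℕ) : ℝ :=
  Ff k i * ((2 * (i : ℝ)) ^ 2 + (8 * (k : ℝ) + 14) * (2 * (i : ℝ))
      + (20 * (k : ℝ) ^ 2 + 68 * (k : ℝ) + 57)) / (2 * (i : ℝ) + 2 * (k : ℝ) + 5) ^ 2

lemma telescope (k i : ℕ) :
    (-16 * ((k : ℝ) + 1) * (2 * (k : ℝ) + 3) ^ 3) * Ff (k + 1) (i + 1) - 2 * Ff k i
      = Gg k (i + 1) - Gg k i := by
  have h5 : (2 * (i : ℝ) + 2 * (k : ℝ) + 5) ≠ 0 := by positivity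
  have h7 : (2 * (i : ℝ) + 2 * (k : ℝ) + 7) ≠ 0 := by positivity
  have e1 : Ff (k + 1) (i + 1)
      = Ff k i / ((2 * (i : ℝ) + 2 * (k : ℝ) + 5) ^ 2 * (2 * (i : ℝ) + 2 * (k : ℝ) + 7) ^ 2) :=
    eq_div_of_mul_eq (by positivity) (Ff_step k i)
  have e2 : Ff k (i + 1)
      = -(Ff k i) * (2 * (i : ℝ) - 2 * (k : ℝ) + 1) ^ 2 / (2 * (i : ℝ) + 2 * (k : ℝ) + 5) ^ 2 :=
    eq_div_of_mul_eq (by positivity) (Ff_succ k i)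
  rw [Gg, Gg, e1, e2]
  push_cast
  field_simp
  ring

lemma Gg_abs (k i : ℕ) :
    |Gg k i| ≤ (20 * (k : ℝ) ^ 2 + 76 * (k : ℝ) + 72) / (2 * (i : ℝ) + 3) := by
  have hk : (0:ℝ) ≤ (k:ℝ) := Nat.cast_nonneg k
  have hi : (0:ℝ) ≤ (i:ℝ) := Nat.cast_nonneg i
  have h5 : (0:ℝ) < (2 * (i : ℝ) + 2 * (k : ℝ) + 5) ^ 2 := by positivity
  have hpoly : (0:ℝ) ≤ (2 * (i : ℝ)) ^ 2 + (8 * (k : ℝ) + 14) * (2 * (i : ℝ))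
      + (20 * (k : ℝ) ^ 2 + 68 * (k : ℝ) + 57) := by positivity
  have hC : (2 * (i : ℝ)) ^ 2 + (8 * (k : ℝ) + 14) * (2 * (i : ℝ))
      + (20 * (k : ℝ) ^ 2 + 68 * (k : ℝ) + 57)
      ≤ (20 * (k : ℝ) ^ 2 + 76 * (k : ℝ) + 72) * (2 * (i : ℝ) + 2 * (k : ℝ) + 5) ^ 2 := by
    nlinarith [sq_nonneg ((i:ℝ)), sq_nonneg ((k:ℝ)), mul_nonneg hi hk, sq_nonneg ((i:ℝ)*(k:ℝ)),
      mul_nonneg (mul_nonneg hi hi) hk, mul_nonneg (mul_nonneg hk hk) hi]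
  have habs : |Gg k i| = |Ff k i| * ((2 * (i : ℝ)) ^ 2 + (8 * (k : ℝ) + 14) * (2 * (i : ℝ))
      + (20 * (k : ℝ) ^ 2 + 68 * (k : ℝ) + 57)) / (2 * (i : ℝ) + 2 * (k : ℝ) + 5) ^ 2 := by
    rw [Gg, abs_div, abs_mul, abs_of_nonneg hpoly, abs_of_pos h5]
  rw [habs]
  have h1 : |Ff k i| * ((2 * (i : ℝ)) ^ 2 + (8 * (k : ℝ) + 14) * (2 * (i : ℝ))
      + (20 * (k : ℝ) ^ 2 + 68 * (k : ℝ) + 57)) / (2 * (i : ℝ) + 2 * (k : ℝ) + 5) ^ 2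
      ≤ |Ff k i| * (20 * (k : ℝ) ^ 2 + 76 * (k : ℝ) + 72) := by
    rw [div_le_iff₀ h5]
    have := abs_nonneg (Ff k i)
    nlinarith [mul_le_mul_of_nonneg_left hC this]
  refine h1.trans ?_
  have h2 := Ff_abs k i
  have h3 : (0:ℝ) < 2 * (i : ℝ) + 3 := by positivity
  have h4 : |Ff k i| ≤ 1 / (2 * (i : ℝ) + 3) := by
    refine h2.trans ?_
    rw [div_le_div_iff₀ (by positivity) h3]
    nlinarith
  calc |Ff k i| * (20 * (k : ℝ) ^ 2 + 76 * (k : ℝ) + 72)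
      ≤ (1 / (2 * (i : ℝ) + 3)) * (20 * (k : ℝ) ^ 2 + 76 * (k : ℝ) + 72) := by
        apply mul_le_mul_of_nonneg_right h4 (by positivity)
    _ = (20 * (k : ℝ) ^ 2 + 76 * (k : ℝ) + 72) / (2 * (i : ℝ) + 3) := by ring

lemma tendsto_Gg (k : ℕ) : Tendsto (Gg k) atTop (𝓝 0) := by
  have hden : Tendsto (fun i : ℕ => 2 * (i : ℝ) + 3) atTop atTop := by
    apply tendsto_atTop_add_const_right
    exact (tendsto_natCast_atTop_atTop).const_mul_atTop two_pos
  have hbd : Tendsto (fun i : ℕ => (20 * (k : ℝ) ^ 2 + 76 * (k : ℝ) + 72) / (2 * (i : ℝ) + 3))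
      atTop (𝓝 0) := Tendsto.div_atTop tendsto_const_nhds hden
  have hbd' : Tendsto (fun i : ℕ => -((20 * (k : ℝ) ^ 2 + 76 * (k : ℝ) + 72) / (2 * (i : ℝ) + 3)))
      atTop (𝓝 0) := by simpa using hbd.neg
  refine tendsto_of_tendsto_of_tendsto_of_le_of_le hbd' hbd ?_ ?_
  · intro i; have := Gg_abs k i; have := abs_le.mp this; linarith [this.1]
  · intro i; exact (abs_le.mp (Gg_abs k i)).2

lemma recur (k : ℕ) :
    (-16 * ((k : ℝ) + 1) * (2 * (k : ℝ) + 3) ^ 3) * ((∑' i, Ff (k + 1) i) - Ff (k + 1) 0)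
      - 2 * (∑' i, Ff k i) = -Gg k 0 := by
  set A : ℝ := -16 * ((k : ℝ) + 1) * (2 * (k : ℝ) + 3) ^ 3 with hA
  have hsum1 : HasSum (Ff (k + 1)) (∑' i, Ff (k + 1) i) := (summable_Ff (k + 1)).hasSum
  have h2 : HasSum (fun i => Ff (k + 1) (i + 1))
      ((∑' i, Ff (k + 1) i) - ∑ i ∈ Finset.range 1, Ff (k + 1) i) :=
    (hasSum_nat_add_iff' 1).mpr hsum1
  rw [Finset.range_one, Finset.sum_singleton] at h2
  have hcombo : HasSum (fun i => A * Ff (k + 1) (i + 1) - 2 * Ff k i)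
      (A * ((∑' i, Ff (k + 1) i) - Ff (k + 1) 0) - 2 * (∑' i, Ff k i)) :=
    (h2.mul_left A).sub ((summable_Ff k).hasSum.mul_left 2)
  have ht1 := hcombo.tendsto_sum_nat
  have heq : ∀ N, ∑ i ∈ Finset.range N, (A * Ff (k + 1) (i + 1) - 2 * Ff k i)
      = Gg k N - Gg k 0 := by
    intro N
    rw [← Finset.sum_range_sub (Gg k)]
    exact Finset.sum_congr rfl fun i _ => telescope k i
  rw [show (fun N => ∑ i ∈ Finset.range N, (A * Ff (k + 1) (i + 1) - 2 * Ff k i))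
      = fun N => Gg k N - Gg k 0 from funext heq] at ht1
  have ht2 : Tendsto (fun N => Gg k N - Gg k 0) atTop (𝓝 (0 - Gg k 0)) :=
    (tendsto_Gg k).sub_const _
  have := tendsto_nhds_unique ht1 ht2
  rw [this]; ring

noncomputable def Dd (k : ℕ) : ℝ := ∏ j ∈ Finset.range (k + 1), (2 * (j : ℝ) + 1)

lemma Dd_pos (k : ℕ) : 0 < Dd k := Finset.prod_pos fun j _ => by positivity

lemma Dd_succ (k : ℕ) : Dd (k + 1) = Dd k * (2 * (k : ℝ) + 3) := by
  rw [Dd, Dd, Finset.prod_range_succ]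
  push_cast; ring

lemma P0eq (k : ℕ) :
    ∏ j ∈ Finset.range (2 * k + 2), (2 * ((0:ℕ) : ℝ) + 2 * (j : ℝ) - 2 * (k : ℝ) + 1) ^ 2
      = Dd k ^ 4 * (2 * (k : ℝ) + 3) ^ 2 / (2 * (k : ℝ) + 1) ^ 2 := by
  induction k with
  | zero =>
    rw [Dd]
    norm_num [Finset.prod_range_succ]
  | succ k ih =>
    have hrel : ∏ j ∈ Finset.range (2 * (k + 1) + 2),
        (2 * ((0:ℕ) : ℝ) + 2 * (j : ℝ) - 2 * ((k + 1 : ℕ) : ℝ) + 1) ^ 2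
        = (2 * (k : ℝ) + 1) ^ 2 * (2 * (k : ℝ) + 5) ^ 2 *
          ∏ j ∈ Finset.range (2 * k + 2), (2 * ((0:ℕ) : ℝ) + 2 * (j : ℝ) - 2 * (k : ℝ) + 1) ^ 2 := by
      have hidx : 2 * (k + 1) + 2 = (2 * k + 3) + 1 := by ring
      rw [hidx, Finset.prod_range_succ' (fun j : ℕ =>
        (2 * ((0:ℕ) : ℝ) + 2 * (j : ℝ) - 2 * ((k + 1 : ℕ) : ℝ) + 1) ^ 2) (2 * k + 3)]
      have e1 : ∀ j : ℕ, (2 * ((0:ℕ) : ℝ) + 2 * ((j + 1 : ℕ) : ℝ) - 2 * ((k + 1 : ℕ) : ℝ) + 1) ^ 2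
          = (2 * ((0:ℕ) : ℝ) + 2 * (j : ℝ) - 2 * (k : ℝ) + 1) ^ 2 := by
        intro j; push_cast; ring
      simp only [e1]
      rw [Finset.prod_range_succ]
      have e2 : (2 * ((0:ℕ) : ℝ) + 2 * (((2 * k + 2 : ℕ)) : ℝ) - 2 * (k : ℝ) + 1) ^ 2
          = (2 * (k : ℝ) + 5) ^ 2 := by push_cast; ring
      have e3 : (2 * ((0:ℕ) : ℝ) + 2 * ((0 : ℕ) : ℝ) - 2 * ((k + 1 : ℕ) : ℝ) + 1) ^ 2
          = (2 * (k : ℝ) + 1) ^ 2 := by push_cast; ring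
      rw [e2, e3]; ring
    rw [hrel, ih, Dd_succ]
    have h1 : (2 * (k : ℝ) + 1) ≠ 0 := by positivity
    have h3 : (2 * (k : ℝ) + 3) ≠ 0 := by positivity
    have hcast : ((k + 1 : ℕ) : ℝ) = (k : ℝ) + 1 := by push_cast; ring
    rw [hcast]
    field_simp
    ring

lemma F0 (k : ℕ) :
    Ff k 0 = (-1) ^ k * (2 * (k : ℝ) + 1) ^ 2 / (Dd k ^ 4 * (2 * (k : ℝ) + 3) ^ 2) := by
  rw [Ff, P0eq]
  have h1 : (2 * (k : ℝ) + 1) ≠ 0 := by positivity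
  have h3 : (2 * (k : ℝ) + 3) ≠ 0 := by positivity
  have hD := Dd_pos k
  rw [Nat.zero_add]
  field_simp

lemma base_case : (∑' i, Ff 0 i) = 1 / 2 - π / 8 := by
  set u : ℕ → ℝ := fun i => (-1) ^ i / (2 * (i : ℝ) + 1) ^ 2 with hu
  set v : ℕ → ℝ := fun i => (-1) ^ i / (2 * (i : ℝ) + 1) with hv
  have hterm : ∀ i : ℕ, Ff 0 i
      = (1 / 4) * (u i - u (i + 1)) - (1 / 4) * (v i + v (i + 1)) := by
    intro i
    rw [Ff, hu, hv]
    simp only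
    have hprod : ∏ j ∈ Finset.range (2 * 0 + 2),
        (2 * (i : ℝ) + 2 * (j : ℝ) - 2 * ((0:ℕ) : ℝ) + 1) ^ 2
        = (2 * (i : ℝ) + 1) ^ 2 * (2 * (i : ℝ) + 3) ^ 2 := by
      rw [show 2 * 0 + 2 = 2 from rfl, Finset.prod_range_succ, Finset.prod_range_one]
      push_cast
      ring
    rw [hprod]
    have hc : ((i + 1 : ℕ) : ℝ) = (i : ℝ) + 1 := by push_cast; ring
    rw [hc, pow_succ]
    have h1 : (2 * (i : ℝ) + 1) ≠ 0 := by positivity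
    have h3 : (2 * (i : ℝ) + 3) ≠ 0 := by positivity
    have hadd : i + 0 = i := rfl
    rw [hadd]
    field_simp
    ring
  have hpartial : ∀ N : ℕ, ∑ i ∈ Finset.range N, Ff 0 i
      = (1 / 4) * (u 0 - u N)
        - (1 / 4) * ((∑ i ∈ Finset.range N, v i) + ((∑ i ∈ Finset.range (N + 1), v i) - v 0)) := by
    intro N
    rw [Finset.sum_congr rfl fun i _ => hterm i]
    rw [Finset.sum_sub_distrib]
    rw [← Finset.mul_sum, ← Finset.mul_sum, Finset.sum_range_sub' u]
    congr 1
    rw [Finset.sum_add_distrib]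
    rw [Finset.sum_range_succ' v N]
    ring
  have hL : Tendsto (fun N => ∑ i ∈ Finset.range N, v i) atTop (𝓝 (π / 4)) := by
    have := Real.tendsto_sum_pi_div_four
    simpa [hv] using this
  have hL1 : Tendsto (fun N => ∑ i ∈ Finset.range (N + 1), v i) atTop (𝓝 (π / 4)) :=
    hL.comp (tendsto_add_atTop_nat 1)
  have huN : Tendsto (fun N => u N) atTop (𝓝 0) := by
    have hbdd : ∀ N : ℕ, |u N| ≤ 1 / (2 * (N : ℝ) + 1) := by
      intro N
      rw [hu]
      simp only
      rw [abs_div, abs_pow, abs_neg, abs_one, one_pow]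
      have h1 : (0:ℝ) < 2 * (N : ℝ) + 1 := by positivity
      rw [abs_of_pos (by positivity : (0:ℝ) < (2 * (N : ℝ) + 1) ^ 2)]
      rw [div_le_div_iff₀ (by positivity) h1]
      nlinarith
    have hden : Tendsto (fun N : ℕ => 2 * (N : ℝ) + 1) atTop atTop := by
      apply tendsto_atTop_add_const_right
      exact (tendsto_natCast_atTop_atTop).const_mul_atTop two_pos
    have hb : Tendsto (fun N : ℕ => 1 / (2 * (N : ℝ) + 1)) atTop (𝓝 0) :=
      Tendsto.div_atTop tendsto_const_nhds hden
    have hb' : Tendsto (fun N : ℕ => -(1 / (2 * (N : ℝ) + 1))) atTop (𝓝 0) := by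
      simpa using hb.neg
    refine tendsto_of_tendsto_of_tendsto_of_le_of_le hb' hb ?_ ?_
    · intro N; linarith [(abs_le.mp (hbdd N)).1]
    · intro N; exact (abs_le.mp (hbdd N)).2
  have hfinal : Tendsto (fun N => ∑ i ∈ Finset.range N, Ff 0 i) atTop
      (𝓝 ((1 / 4) * (u 0 - 0) - (1 / 4) * (π / 4 + (π / 4 - v 0)))) := by
    rw [show (fun N => ∑ i ∈ Finset.range N, Ff 0 i)
        = fun N => (1 / 4) * (u 0 - u N)
          - (1 / 4) * ((∑ i ∈ Finset.range N, v i) + ((∑ i ∈ Finset.range (N + 1), v i) - v 0))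
        from funext hpartial]
    exact (((tendsto_const_nhds.sub huN).const_mul _).sub
      (((hL.add (hL1.sub_const _))).const_mul _))
  have hsum := (summable_Ff 0).hasSum.tendsto_sum_nat
  have := tendsto_nhds_unique hsum hfinal
  rw [this, hu, hv]
  norm_num
  ring

lemma key (k : ℕ) : (∑' i, Ff k i) =
    (-1 : ℝ) ^ (k + 1) *
      (((Nat.factorial (k + 1) : ℝ) ^ 3 /
          ((Nat.factorial (2 * k + 2) : ℝ) ^ 3 * (Nat.factorial k : ℝ))) * π -
        1 / (2 * Dd k ^ 4)) := by
  induction k with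
  | zero =>
    rw [base_case, Dd]
    norm_num [Nat.factorial]
    ring
  | succ k ih =>
    have hA : (-16 * ((k : ℝ) + 1) * (2 * (k : ℝ) + 3) ^ 3) ≠ 0 := by
      have h1 : (0:ℝ) < (k : ℝ) + 1 := by positivity
      have h2 : (0:ℝ) < (2 * (k : ℝ) + 3) ^ 3 := by positivity
      nlinarith
    have hrec := recur k
    have hS : (∑' i, Ff (k + 1) i)
        = ((-16 * ((k : ℝ) + 1) * (2 * (k : ℝ) + 3) ^ 3) * Ff (k + 1) 0
            + 2 * (∑' i, Ff k i) - Gg k 0) / (-16 * ((k : ℝ) + 1) * (2 * (k : ℝ) + 3) ^ 3) := by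
      rw [eq_div_iff hA]; linarith [hrec]
    rw [hS]
    have hG0 : Gg k 0 = Ff k 0 * (20 * (k : ℝ) ^ 2 + 68 * (k : ℝ) + 57)
        / (2 * (k : ℝ) + 5) ^ 2 := by
      rw [Gg]; norm_num
    rw [hG0, F0, F0, ih, Dd_succ]
    -- factorial rewrites
    have hf1 : (Nat.factorial (k + 1 + 1) : ℝ) = ((k : ℝ) + 2) * (Nat.factorial (k + 1) : ℝ) := by
      rw [Nat.factorial_succ]; push_cast; ring
    have hf2 : (Nat.factorial (k + 1) : ℝ) = ((k : ℝ) + 1) * (Nat.factorial k : ℝ) := by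
      rw [Nat.factorial_succ]; push_cast; ring
    have hidx : 2 * (k + 1) + 2 = (2 * k + 2) + 1 + 1 := by ring
    have hf3 : (Nat.factorial (2 * (k + 1) + 2) : ℝ)
        = (2 * (k : ℝ) + 4) * (2 * (k : ℝ) + 3) * (Nat.factorial (2 * k + 2) : ℝ) := by
      rw [hidx, Nat.factorial_succ, Nat.factorial_succ]; push_cast; ring
    rw [hf1, hf3, hf2]
    have hcast : ((k + 1 : ℕ) : ℝ) = (k : ℝ) + 1 := by push_cast; ring
    rw [hcast]
    have hsgn1 : (-1 : ℝ) ^ (k + 1) = -(-1 : ℝ) ^ k := by rw [pow_succ]; ring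
    have hsgn2 : (-1 : ℝ) ^ (k + 1 + 1) = (-1 : ℝ) ^ k := by rw [pow_succ, pow_succ]; ring
    rw [hsgn2, hsgn1]
    have hD := Dd_pos k
    have hfk : (Nat.factorial k : ℝ) ≠ 0 := Nat.cast_ne_zero.mpr (Nat.factorial_ne_zero k)
    have hf2k : (Nat.factorial (2 * k + 2) : ℝ) ≠ 0 :=
      Nat.cast_ne_zero.mpr (Nat.factorial_ne_zero (2 * k + 2))
    have h3 : (2 * (k : ℝ) + 3) ≠ 0 := by positivity
    have h5 : (2 * (k : ℝ) + 5) ≠ 0 := by positivity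
    have hk1 : ((k : ℝ) + 1) ≠ 0 := by positivity
    have hDne : Dd k ≠ 0 := ne_of_gt hD
    field_simp
    ring

/-- For every integer `k ≥ 0`,
`Σ_{n=1-k}^∞ (-1)^{n-1} / ∏_{j=0}^{2k+1} (2n+2j−1)²
  = (-1)^{k+1}·( ((k+1)!)³/(((2k+2)!)³·k!)·π − 1/(2·((2k+1)!!)⁴) )`,
where `(2k+1)!! = ∏_{j=0}^{k} (2j+1)`.
The summation index is shifted: `i : ℕ` corresponds to `n = i + 1 − k`, so that
`(-1)^{n-1} = (-1)^{i+k}` and `2n+2j−1 = 2i+2j−2k+1`. -/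
theorem general_even_odd_squares_sum (k : ℕ) :
    ∑' i : ℕ, (-1 : ℝ) ^ (i + k) /
        ∏ j ∈ Finset.range (2 * k + 2), (2 * (i : ℝ) + 2 * (j : ℝ) - 2 * (k : ℝ) + 1) ^ 2 =
      (-1 : ℝ) ^ (k + 1) *
        (((Nat.factorial (k + 1) : ℝ) ^ 3 /
            ((Nat.factorial (2 * k + 2) : ℝ) ^ 3 * (Nat.factorial k : ℝ))) * π -
          1 / (2 * (∏ j ∈ Finset.range (k + 1), (2 * (j : ℝ) + 1)) ^ 4)) :=
  key k
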